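/- Let α ∈ [1,2], σ > 0 and m ∈ ℝ, and set A_α := ∫_ℝ exp(−|x|^α) dx and B_α := ∫_ℝ |x|^{α−1}·exp(−|x|^α/2) dx. Let λ ∈ (0, B_α/(σ·A_α)] and define R_λ := σ·(2·log(B_α/(σ·A_α·λ)))^{1/α}. Then: (i) ∫_{{a : |a−m| ≥ R_λ}} (|a−m|^{α−1}/σ^α)·(1/(σ·A_α))·exp(−|a−m|^α/σ^α) da ≤ λ; and (ii) for every a with |a−m| ≤ R_λ, |a−m|^{α−1}/σ^α ≤ (1/σ)·(2·log(B_α/(σ·A_α·λ)))^{(α−1)/α}. -/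

import Mathlib

open MeasureTheory Set Real

/-- Explicit instantiation of the exploration tolerance for the moderate-tailed policy:
for `λ ∈ (0, B_α/(σA_α)]` and `R_λ = σ (2 log(B_α/(σA_αλ)))^{1/α}`, the score-mass
outside `{|a-m| ≤ R_λ}` is at most `λ`, while on that set the score magnitude
`|a-m|^{α-1}/σ^α` is at most `(1/σ)(2 log(B_α/(σA_αλ)))^{(α-1)/α}`. -/
lemma integrable_comp_abs'' {f : ℝ → ℝ} (hf : IntegrableOn f (Ioi 0)) :
    Integrable (fun x => f |x|) := by
  have int_Ioi : IntegrableOn (fun x ↦ f |x|) (Ioi 0) :=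
    hf.congr_fun (fun x hx => by rw [abs_of_pos hx]) measurableSet_Ioi
  have int_Iic : IntegrableOn (fun x ↦ f |x|) (Iic 0) := by
    rw [← Measure.map_neg_eq_self (volume : Measure ℝ)]
    have m : MeasurableEmbedding fun x : ℝ => -x := (Homeomorph.neg ℝ).measurableEmbedding
    rw [m.integrableOn_map_iff]
    simp_rw [Function.comp_def, abs_neg, neg_preimage, neg_Iic, neg_zero]
    exact Iff.mpr integrableOn_Ici_iff_integrableOn_Ioi int_Ioi
  rw [← integrableOn_univ, ← Iic_union_Ioi (a := (0:ℝ))]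
  exact int_Iic.union int_Ioi

theorem stmt11 (α : ℝ) (hα : α ∈ Set.Icc (1 : ℝ) 2) (σ : ℝ) (hσ : 0 < σ) (m : ℝ)
    (Aα Bα : ℝ)
    (hAα : Aα = ∫ x : ℝ, Real.exp (-(|x| ^ α)))
    (hBα : Bα = ∫ x : ℝ, |x| ^ (α - 1) * Real.exp (-(|x| ^ α) / 2))
    (lam : ℝ) (hlam : lam ∈ Set.Ioc (0 : ℝ) (Bα / (σ * Aα)))
    (Rlam : ℝ)
    (hRlam : Rlam = σ * (2 * Real.log (Bα / (σ * Aα * lam))) ^ ((1 : ℝ) / α)) :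
    (∫ a in {a : ℝ | Rlam ≤ |a - m|},
        (|a - m| ^ (α - 1) / σ ^ α) * ((1 / (σ * Aα)) * Real.exp (-(|a - m| ^ α) / σ ^ α))
      ≤ lam) ∧
    ∀ a : ℝ, |a - m| ≤ Rlam →
      |a - m| ^ (α - 1) / σ ^ α
        ≤ (1 / σ) * (2 * Real.log (Bα / (σ * Aα * lam))) ^ ((α - 1) / α) := by
  obtain ⟨hα1, hα2⟩ := hα
  obtain ⟨hlam0, hlamB⟩ := hlam
  have hαpos : (0:ℝ) < α := lt_of_lt_of_le one_pos hα1
  have hα1' : (0:ℝ) ≤ α - 1 := by linarith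
  have hσα : (0:ℝ) < σ ^ α := rpow_pos_of_pos hσ α
  -- integrability of the Aα integrand
  have hAint : Integrable (fun x : ℝ => Real.exp (-(|x| ^ α))) := by
    have h0 : IntegrableOn (fun x : ℝ => Real.exp (-(x ^ α))) (Ioi 0) := by
      have := integrableOn_rpow_mul_exp_neg_rpow (p := α) (s := 0) (by norm_num) hαpos
      simpa using this
    exact integrable_comp_abs'' h0
  -- integrability of the Bα integrand
  have hBint : Integrable (fun x : ℝ => |x| ^ (α - 1) * Real.exp (-(|x| ^ α) / 2)) := by
    have h0 : IntegrableOn (fun x : ℝ => x ^ (α - 1) * Real.exp (-(x ^ α) / 2)) (Ioi 0) := by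
      have := integrableOn_rpow_mul_exp_neg_mul_rpow (p := α) (s := α - 1) (b := 1/2)
        (by linarith) hαpos (by norm_num)
      refine this.congr_fun (fun x hx => ?_) measurableSet_Ioi
      congr 1
      ring_nf
    exact integrable_comp_abs'' h0
  -- Aα > 0
  have hA : 0 < Aα := by
    rw [hAα]
    rw [integral_pos_iff_support_of_nonneg_ae (ae_of_all _ fun x => (exp_pos _).le) hAint]
    have : Function.support (fun x : ℝ => Real.exp (-(|x| ^ α))) = Set.univ :=
      Set.eq_univ_of_forall fun x => (exp_pos _).ne'
    simp [this]
  have hσA : (0:ℝ) < σ * Aα := mul_pos hσ hA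
  have hσAlam : (0:ℝ) < σ * Aα * lam := mul_pos hσA hlam0
  have hlamB' : lam * (σ * Aα) ≤ Bα := (le_div_iff₀ hσA).mp hlamB
  have hB : 0 < Bα := lt_of_lt_of_le (by nlinarith) hlamB'
  set t : ℝ := 2 * Real.log (Bα / (σ * Aα * lam)) with ht
  have hy1 : (1:ℝ) ≤ Bα / (σ * Aα * lam) := by
    rw [le_div_iff₀ hσAlam]
    nlinarith
  have ht0 : 0 ≤ t := by
    have := Real.log_nonneg hy1
    nlinarith
  have hexpt : Real.exp (-(t/2)) = σ * Aα * lam / Bα := by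
    have h2 : -(t/2) = Real.log ((Bα / (σ * Aα * lam))⁻¹) := by
      rw [Real.log_inv]; rw [ht]; ring
    rw [h2, Real.exp_log (by positivity)]
    rw [inv_div]
  constructor
  · -- Part (i)
    set f : ℝ → ℝ := fun x => |x| ^ (α - 1) * Real.exp (-(|x| ^ α) / 2) with hf
    set C : ℝ := 1 / (σ * Aα) * Real.exp (-(t/2)) / σ ^ α with hC
    have hCpos : 0 < C :=
      div_pos (mul_pos (one_div_pos.mpr hσA) (exp_pos _)) hσα
    set h : ℝ → ℝ := fun a => C * (|a - m| ^ (α - 1) * Real.exp (-(|a - m| ^ α) / (2 * σ ^ α)))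
      with hh
    set g : ℝ → ℝ := fun a =>
      (|a - m| ^ (α - 1) / σ ^ α) * ((1 / (σ * Aα)) * Real.exp (-(|a - m| ^ α) / σ ^ α)) with hg
    -- pointwise rescaling identity
    have hptw : ∀ a : ℝ, |a - m| ^ (α - 1) * Real.exp (-(|a - m| ^ α) / (2 * σ ^ α))
        = σ ^ (α - 1) * f ((a - m)/σ) := by
      intro a
      have habs : |(a - m)/σ| = |a - m|/σ := by rw [abs_div, abs_of_pos hσ]
      have hσ1 : (0:ℝ) < σ ^ (α - 1) := rpow_pos_of_pos hσ _
      simp only [hf, habs]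
      rw [Real.div_rpow (abs_nonneg _) hσ.le, Real.div_rpow (abs_nonneg _) hσ.le]
      rw [show σ ^ (α - 1) * (|a - m| ^ (α - 1) / σ ^ (α - 1) *
          Real.exp (-(|a - m| ^ α / σ ^ α) / 2))
        = (σ ^ (α - 1) / σ ^ (α - 1)) * (|a - m| ^ (α - 1) *
          Real.exp (-(|a - m| ^ α / σ ^ α) / 2)) from by ring]
      rw [div_self hσ1.ne', one_mul]
      congr 1
      ring_nf
    -- the key integral computation
    have hint : ∫ a : ℝ, |a - m| ^ (α - 1) * Real.exp (-(|a - m| ^ α) / (2 * σ ^ α))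
        = σ ^ α * Bα := by
      simp_rw [hptw]
      rw [integral_const_mul, integral_sub_right_eq_self (fun x => f (x/σ)) m,
        Measure.integral_comp_div f σ, smul_eq_mul, abs_of_pos hσ, ← hBα]
      rw [show σ ^ (α - 1) * (σ * Bα) = σ ^ (α - 1) * σ * Bα from by ring]
      congr 1
      rw [← Real.rpow_add_one hσ.ne' (α - 1), sub_add_cancel]
    -- integrability of h
    have hfint : Integrable f := hBint
    have hHint : Integrable h := by
      have hcomp : Integrable (fun a : ℝ => f ((a - m)/σ)) :=
        (hfint.comp_div hσ.ne').comp_sub_right m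
      simp_rw [hh, hptw]
      exact (hcomp.const_mul _).const_mul _
    have hh_nonneg : ∀ a, 0 ≤ h a := by
      intro a
      have : (0:ℝ) ≤ |a - m| ^ (α - 1) := rpow_nonneg (abs_nonneg _) _
      have := exp_pos (-(|a - m| ^ α) / (2 * σ ^ α))
      simp only [hh]
      positivity
    have hg_nonneg : ∀ a, 0 ≤ g a := by
      intro a
      have : (0:ℝ) ≤ |a - m| ^ (α - 1) := rpow_nonneg (abs_nonneg _) _
      simp only [hg]
      positivity
    -- pointwise bound on S
    have hbound : ∀ a : ℝ, Rlam ≤ |a - m| → g a ≤ h a := by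
      intro a ha
      have hR0 : (0:ℝ) ≤ Rlam := by rw [hRlam]; positivity
      have hRα : Rlam ^ α = σ ^ α * t := by
        rw [hRlam, mul_rpow hσ.le (rpow_nonneg ht0 _), ← Real.rpow_mul ht0,
          one_div_mul_cancel hαpos.ne', Real.rpow_one]
      have hu : σ ^ α * t ≤ |a - m| ^ α := by
        rw [← hRα]; exact rpow_le_rpow hR0 ha hαpos.le
      have hv : t ≤ |a - m| ^ α / σ ^ α := (le_div_iff₀ hσα).mpr (by nlinarith)
      have hexpb : Real.exp (-(|a - m| ^ α) / σ ^ α)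
          ≤ Real.exp (-(t/2)) * Real.exp (-(|a - m| ^ α) / (2 * σ ^ α)) := by
        rw [← Real.exp_add]
        apply Real.exp_le_exp.mpr
        have e1 : -(|a - m| ^ α) / σ ^ α = -(|a - m| ^ α / σ ^ α) := by ring
        have e2 : -(|a - m| ^ α) / (2 * σ ^ α) = -(|a - m| ^ α / σ ^ α)/2 := by ring
        rw [e1, e2]
        linarith
      have hnn : (0:ℝ) ≤ |a - m| ^ (α - 1) / σ ^ α * (1 / (σ * Aα)) := by
        have : (0:ℝ) ≤ |a - m| ^ (α - 1) := rpow_nonneg (abs_nonneg _) _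
        positivity
      have key := mul_le_mul_of_nonneg_left hexpb hnn
      calc g a = |a - m| ^ (α - 1) / σ ^ α * (1 / (σ * Aα))
            * Real.exp (-(|a - m| ^ α) / σ ^ α) := by simp only [hg]; ring
        _ ≤ |a - m| ^ (α - 1) / σ ^ α * (1 / (σ * Aα))
            * (Real.exp (-(t/2)) * Real.exp (-(|a - m| ^ α) / (2 * σ ^ α))) := key
        _ = h a := by simp only [hh, hC]; ring
    -- assemble
    have hS : MeasurableSet {a : ℝ | Rlam ≤ |a - m|} := by
      apply measurableSet_le measurable_const
      exact (measurable_id.sub_const m).abs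
    have hgm : AEStronglyMeasurable g (volume.restrict {a : ℝ | Rlam ≤ |a - m|}) := by
      apply AEStronglyMeasurable.restrict
      apply Measurable.aestronglyMeasurable
      fun_prop
    have hgint : IntegrableOn g {a : ℝ | Rlam ≤ |a - m|} := by
      refine Integrable.mono' hHint.integrableOn hgm ?_
      rw [ae_restrict_iff' hS]
      refine ae_of_all _ fun a ha => ?_
      rw [Real.norm_of_nonneg (hg_nonneg a)]
      exact hbound a ha
    calc ∫ a in {a : ℝ | Rlam ≤ |a - m|}, g a
        ≤ ∫ a in {a : ℝ | Rlam ≤ |a - m|}, h a :=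
          setIntegral_mono_on hgint hHint.integrableOn hS (fun a ha => hbound a ha)
      _ ≤ ∫ a : ℝ, h a := setIntegral_le_integral hHint (ae_of_all _ hh_nonneg)
      _ = C * (σ ^ α * Bα) := by rw [hh, integral_const_mul, hint]
      _ = lam := by
          rw [hC, hexpt]
          field_simp
  · -- Part (ii)
    intro a ha
    have habs : (0:ℝ) ≤ |a - m| := abs_nonneg _
    have hR0 : (0:ℝ) ≤ Rlam := by
      rw [hRlam]; positivity
    have h1 : |a - m| ^ (α - 1) ≤ Rlam ^ (α - 1) := rpow_le_rpow habs ha hα1'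
    have hReq : Rlam ^ (α - 1) = σ ^ (α - 1) * t ^ ((α - 1)/α) := by
      rw [hRlam, mul_rpow hσ.le (rpow_nonneg ht0 _), ← Real.rpow_mul ht0,
        div_mul_eq_mul_div, one_mul]
    have hσs : σ ^ (α - 1) = σ ^ α / σ := by
      rw [Real.rpow_sub hσ, Real.rpow_one]
    have h2 : |a - m| ^ (α - 1) / σ ^ α ≤ Rlam ^ (α - 1) / σ ^ α := by gcongr
    refine h2.trans (le_of_eq ?_)
    rw [hReq, hσs]
    field_simp
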